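/- Let k ≥ 1 be an integer and let T be a finite rooted tree with n ≥ 1 vertices in which every vertex has exactly 0 or 2 children. Then the vertex set V can be partitioned into (possibly empty) sets B_1, X_1, B_2, X_2, …, X_{k−1}, B_k such that: (P1) for each 1 ≤ i ≤ k, every connected component of the subgraph induced on B_i has cardinality at most n^{1/k} (as a real-number bound); (P2) for each 1 ≤ i ≤ k−1, every vertex of X_i has at least one child in B_1 ∪ X_1 ∪ ⋯ ∪ X_{i−1} ∪ B_i; and (P3) for each 1 ≤ i ≤ k, every child of every vertex of B_i lies in B_1 ∪ X_1 ∪ ⋯ ∪ X_{i−1} ∪ B_i. -/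

import Mathlib

open Function

/-- Adjacency (parent/child relation) restricted to the subset `S`: connected
components of `S` are taken w.r.t. this relation. -/
def adjOn {V : Type*} (par : V → V) (S : Set V) (u v : V) : Prop :=
  u ∈ S ∧ v ∈ S ∧ u ≠ v ∧ (par u = v ∨ par v = u)

/-- The union `B₁ ∪ X₁ ∪ ⋯ ∪ X_{i−1} ∪ B_i`. -/
def lowerUnion {V : Type*} (B X : ℕ → Set V) (i : ℕ) : Set V :=
  (⋃ j ∈ Set.Icc 1 i, B j) ∪ ⋃ j ∈ Set.Icc 1 (i - 1), X j

namespace Stmt10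

variable {V : Type*}

/-- subtree (set of descendants, including `v`) -/
def desc (par : V → V) (v : V) : Set V := {u | ∃ m, par^[m] u = v}

/-- number of elements of `S` in the subtree of `v` -/
noncomputable def Wt (par : V → V) (S : Set V) (v : V) : ℕ := (desc par v ∩ S).ncard

lemma mem_desc_self (par : V → V) (v : V) : v ∈ desc par v := ⟨0, rfl⟩

lemma child_mem_desc (par : V → V) {u v : V} (h : par u = v) : u ∈ desc par v := ⟨1, h⟩

lemma desc_trans {par : V → V} {u v : V} (h : u ∈ desc par v) : desc par u ⊆ desc par v := by
  obtain ⟨e, he⟩ := h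
  rintro w ⟨a, ha⟩
  exact ⟨e + a, by rw [Function.iterate_add_apply, ha, he]⟩

section Acyclic

variable {par : V → V} {r : V} (hroot : par r = r) (hreach : ∀ v : V, ∃ m : ℕ, par^[m] v = r)

include hroot hreach in
lemma no_cycle : ∀ v : V, ∀ c : ℕ, c ≠ 0 → par^[c] v = v → v = r := by
  classical
  suffices h : ∀ d : ℕ, ∀ v : V, Nat.find (hreach v) = d →
      ∀ c : ℕ, c ≠ 0 → par^[c] v = v → v = r by
    intro v; exact h _ v rfl
  intro d
  induction d using Nat.strong_induction_on with
  | _ d ih =>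
    intro v hd c hc hcyc
    by_cases hv : v = r
    · exact hv
    · have hd0 : d ≠ 0 := by
        rintro rfl
        exact hv (by have hs := Nat.find_spec (hreach v); rw [hd] at hs; simpa using hs)
      have hfind : par^[d] v = r := hd ▸ Nat.find_spec (hreach v)
      obtain ⟨d', rfl⟩ : ∃ d', d = d' + 1 := ⟨d - 1, by omega⟩
      have hpv : par^[d'] (par v) = r := by
        rw [← Function.iterate_succ_apply]; exact hfind
      have hlt : Nat.find (hreach (par v)) < d' + 1 := by
        have := Nat.find_min' (hreach (par v)) hpv; omega
      have hcyc' : par^[c] (par v) = par v := by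
        rw [← Function.iterate_succ_apply, Function.iterate_succ_apply', hcyc]
      have hpr : par v = r := ih _ hlt (par v) rfl c hc hcyc'
      obtain ⟨c', rfl⟩ : ∃ c', c = c' + 1 := ⟨c - 1, by omega⟩
      have : par^[c' + 1] v = r := by
        rw [Function.iterate_succ_apply, hpr, Function.iterate_fixed hroot]
      exact absurd (this ▸ hcyc).symm hv

include hroot hreach in
lemma desc_antisymm {u v : V} (huv : u ∈ desc par v) (hvu : v ∈ desc par u) : u = v := by
  obtain ⟨a, ha⟩ := huv
  obtain ⟨b, hb⟩ := hvu
  rcases Nat.eq_zero_or_pos a with rfl | hapos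
  · simpa using ha
  · have hcyc : par^[b + a] u = u := by rw [Function.iterate_add_apply, ha, hb]
    have hur : u = r := no_cycle hroot hreach u (b + a) (by omega) hcyc
    subst hur
    rw [Function.iterate_fixed hroot] at ha
    exact ha

include hroot hreach in
lemma not_mem_desc_child {u v : V} (hu : u ≠ v) (hpu : par u = v) : v ∉ desc par u :=
  fun h => hu (desc_antisymm hroot hreach (child_mem_desc par hpu) h)

include hroot hreach in
lemma children_desc_disjoint {v a b : V} (hab : a ≠ b) (hav : a ≠ v) (hbv : b ≠ v)
    (hpa : par a = v) (hpb : par b = v) : desc par a ∩ desc par b = ∅ := by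
  have key : ∀ (x y : V), x ≠ y → x ≠ v → y ≠ v → par x = v → par y = v →
      ∀ c : ℕ, par^[c] x = y → False := by
    intro x y hxy hxv hyv hpx hpy c hc
    rcases Nat.eq_zero_or_pos c with rfl | hcpos
    · exact hxy hc
    · obtain ⟨c', rfl⟩ : ∃ c', c = c' + 1 := ⟨c - 1, by omega⟩
      have h1 : par^[c'] v = y := by
        rw [← hpx, ← Function.iterate_succ_apply]; exact hc
      rcases Nat.eq_zero_or_pos c' with rfl | h1pos
      · exact hyv (by simpa using h1.symm)
      · have hcyc : par^[c' + 1] v = v := by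
          rw [Function.iterate_succ_apply', h1, hpy]
        have hvr : v = r := no_cycle hroot hreach v (c' + 1) (by omega) hcyc
        subst hvr
        rw [Function.iterate_fixed hroot] at h1
        exact hyv h1.symm
  ext w
  simp only [Set.mem_inter_iff, Set.mem_empty_iff_false, iff_false, not_and]
  rintro ⟨p, hp⟩ ⟨q, hq⟩
  rcases lt_trichotomy p q with h | h | h
  · have h2 : par^[q - p + p] w = b := by rw [Nat.sub_add_cancel (le_of_lt h)]; exact hq
    rw [Function.iterate_add_apply, hp] at h2
    exact key a b hab hav hbv hpa hpb _ h2
  · exact hab (by rw [← hp, h, hq])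
  · have h2 : par^[p - q + q] w = a := by rw [Nat.sub_add_cancel (le_of_lt h)]; exact hp
    rw [Function.iterate_add_apply, hq] at h2
    exact key b a (Ne.symm hab) hbv hav hpb hpa _ h2

end Acyclic

/-- decomposition of membership in a subtree -/
lemma desc_mem_cases {par : V → V} {u v : V} (h : u ∈ desc par v) :
    u = v ∨ ∃ c, c ≠ v ∧ par c = v ∧ u ∈ desc par c := by
  classical
  have hex : ∃ m, par^[m] u = v := h
  have hspec : par^[Nat.find hex] u = v := Nat.find_spec hex
  rcases Nat.eq_zero_or_pos (Nat.find hex) with h0 | hpos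
  · left; rw [h0] at hspec; exact hspec
  · right
    refine ⟨par^[Nat.find hex - 1] u, ?_, ?_, ⟨Nat.find hex - 1, rfl⟩⟩
    · intro hequ
      exact Nat.find_min hex (m := Nat.find hex - 1) (by omega) hequ
    · have h2 : par^[(Nat.find hex - 1) + 1] u = v := by
        rw [Nat.sub_add_cancel hpos]; exact hspec
      rw [Function.iterate_succ_apply'] at h2
      exact h2

/-- if v is a leaf, desc v = {v} -/
lemma desc_leaf {par : V → V} {v : V} (h : {u | u ≠ v ∧ par u = v} = (∅ : Set V)) :
    desc par v = {v} := by
  ext u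
  simp only [Set.mem_singleton_iff]
  constructor
  · intro hu
    rcases desc_mem_cases hu with h1 | ⟨c, hc1, hc2, _⟩
    · exact h1
    · have hmem : c ∈ ({u | u ≠ v ∧ par u = v} : Set V) := ⟨hc1, hc2⟩
      rw [h] at hmem
      exact hmem.elim
  · intro h2; rw [h2]; exact mem_desc_self par v


section Weights

variable {par : V → V} {r : V}

lemma Wt_mono_set [Fintype V] {S T : Set V} (h : S ⊆ T) (v : V) : Wt par S v ≤ Wt par T v :=
  Set.ncard_le_ncard (Set.inter_subset_inter_right _ h) (Set.toFinite _)

lemma Wt_mono [Fintype V] {u v : V} (h : u ∈ desc par v) (S : Set V) :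
    Wt par S u ≤ Wt par S v :=
  Set.ncard_le_ncard (Set.inter_subset_inter_left _ (desc_trans h)) (Set.toFinite _)

lemma Wt_le_ncard [Fintype V] (S : Set V) (v : V) : Wt par S v ≤ S.ncard :=
  Set.ncard_le_ncard Set.inter_subset_right (Set.toFinite _)

lemma Wt_leaf [Fintype V] {v : V} (h : {u | u ≠ v ∧ par u = v} = (∅ : Set V)) (S : Set V) :
    Wt par S v ≤ 1 := by
  have : desc par v ∩ S ⊆ {v} := by rw [desc_leaf h]; exact Set.inter_subset_left
  calc Wt par S v ≤ ({v} : Set V).ncard :=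
        Set.ncard_le_ncard this (Set.toFinite _)
    _ = 1 := Set.ncard_singleton v

variable (hroot : par r = r) (hreach : ∀ v : V, ∃ m : ℕ, par^[m] v = r)

include hroot hreach in
lemma Wt_superadd [Fintype V] {v a b : V} (hab : a ≠ b) (hav : a ≠ v) (hbv : b ≠ v)
    (hpa : par a = v) (hpb : par b = v) (S : Set V) :
    Wt par S a + Wt par S b ≤ Wt par S v := by
  have hdisj : Disjoint (desc par a ∩ S) (desc par b ∩ S) := by
    rw [Set.disjoint_iff_inter_eq_empty]
    have := children_desc_disjoint hroot hreach hab hav hbv hpa hpb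
    rw [Set.eq_empty_iff_forall_notMem] at this ⊢
    rintro x ⟨⟨h1, _⟩, ⟨h2, _⟩⟩
    exact this x ⟨h1, h2⟩
  have hsub : (desc par a ∩ S) ∪ (desc par b ∩ S) ⊆ desc par v ∩ S := by
    rintro x (⟨h1, h2⟩ | ⟨h1, h2⟩)
    · exact ⟨desc_trans (child_mem_desc par hpa) h1, h2⟩
    · exact ⟨desc_trans (child_mem_desc par hpb) h1, h2⟩
  calc Wt par S a + Wt par S b
      = ((desc par a ∩ S) ∪ (desc par b ∩ S)).ncard :=
        (Set.ncard_union_eq hdisj (Set.toFinite _) (Set.toFinite _)).symm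
    _ ≤ Wt par S v := Set.ncard_le_ncard hsub (Set.toFinite _)

include hroot hreach in
lemma tree_ind [Fintype V] (P : V → Prop)
    (h : ∀ v, (∀ u, u ≠ v → par u = v → P u) → P v) : ∀ v, P v := by
  suffices hs : ∀ N : ℕ, ∀ v, (desc par v).ncard ≤ N → P v from
    fun v => hs _ v le_rfl
  intro N
  induction N with
  | zero =>
    intro v hv
    exfalso
    have : v ∈ (∅ : Set V) := by
      rw [← Set.ncard_eq_zero (Set.toFinite (desc par v)) |>.mp (Nat.le_zero.mp hv)]
      exact mem_desc_self par v
    exact this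
  | succ N ih =>
    intro v hv
    apply h
    intro u hu hpu
    apply ih
    have hss : desc par u ⊂ desc par v := by
      constructor
      · exact desc_trans (child_mem_desc par hpu)
      · intro hsub
        exact not_mem_desc_child hroot hreach hu hpu (hsub (mem_desc_self par v))
    have := Set.ncard_lt_ncard hss (Set.toFinite _)
    omega

/-- subtree decomposes into root and the two children's subtrees -/
lemma desc_subset_children {v a b : V}
    (hset : {u | u ≠ v ∧ par u = v} = ({a, b} : Set V)) :
    desc par v ⊆ insert v (desc par a ∪ desc par b) := by
  intro u hu
  rcases desc_mem_cases hu with h1 | ⟨c, hc1, hc2, hc3⟩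
  · exact Set.mem_insert_iff.mpr (Or.inl h1)
  · have : c ∈ ({a, b} : Set V) := hset ▸ (⟨hc1, hc2⟩ : c ∈ {u | u ≠ v ∧ par u = v})
    rcases this with rfl | rfl
    · exact Set.mem_insert_iff.mpr (Or.inr (Or.inl hc3))
    · exact Set.mem_insert_iff.mpr (Or.inr (Or.inr hc3))

end Weights

/-- the sets of still-unassigned vertices -/
def Rset (par : V → V) (τ : ℕ) : ℕ → Set V
  | 0 => Set.univ
  | i+1 => {v | v ∈ Rset par τ i ∧ τ < Wt par (Rset par τ i) v ∧
      ∀ u, u ≠ v → par u = v → u ∈ Rset par τ i ∧ τ < Wt par (Rset par τ i) u}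

/-- B-classes -/
def Bset (par : V → V) (τ : ℕ) : ℕ → Set V
  | 0 => ∅
  | i+1 => {v | v ∈ Rset par τ i ∧ Wt par (Rset par τ i) v ≤ τ}

/-- X-classes -/
def Xset (par : V → V) (τ : ℕ) : ℕ → Set V
  | 0 => ∅
  | i+1 => Rset par τ i \ (Bset par τ (i+1) ∪ Rset par τ (i+1))


section Struct

variable {par : V → V} {τ : ℕ}

lemma Rset_succ_subset (par : V → V) (τ i : ℕ) : Rset par τ (i+1) ⊆ Rset par τ i :=
  fun _ h => h.1

lemma Rset_antitone (par : V → V) (τ : ℕ) {i j : ℕ} (h : i ≤ j) :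
    Rset par τ j ⊆ Rset par τ i := by
  induction j with
  | zero => simp_all
  | succ j ih =>
    rcases Nat.lt_or_ge i (j+1) with h1 | h1
    · exact fun x hx => ih (by omega) (Rset_succ_subset par τ j hx)
    · have : i = j + 1 := by omega
      subst this; exact fun x hx => hx

lemma Bset_subset (par : V → V) (τ i : ℕ) : Bset par τ (i+1) ⊆ Rset par τ i :=
  fun _ h => h.1

lemma Xset_subset (par : V → V) (τ i : ℕ) : Xset par τ (i+1) ⊆ Rset par τ i :=
  fun _ h => h.1

lemma Bset_inter_Rset (par : V → V) (τ i : ℕ) : Bset par τ (i+1) ∩ Rset par τ (i+1) = ∅ := by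
  ext v
  simp only [Set.mem_inter_iff, Set.mem_empty_iff_false, iff_false, not_and]
  rintro ⟨_, hb⟩ ⟨_, hw, _⟩
  omega

lemma Xset_inter_Rset (par : V → V) (τ i : ℕ) : Xset par τ (i+1) ∩ Rset par τ (i+1) = ∅ := by
  ext v
  simp only [Set.mem_inter_iff, Set.mem_empty_iff_false, iff_false, not_and]
  rintro ⟨_, hx⟩ hr
  exact hx (Or.inr hr)

lemma Bset_inter_Xset (par : V → V) (τ i : ℕ) : Bset par τ (i+1) ∩ Xset par τ (i+1) = ∅ := by
  ext v
  simp only [Set.mem_inter_iff, Set.mem_empty_iff_false, iff_false, not_and]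
  rintro hb ⟨_, hx⟩
  exact hx (Or.inl hb)

lemma Rset_diff (par : V → V) (τ i : ℕ) {v : V} (hv : v ∈ Rset par τ i)
    (hv2 : v ∉ Rset par τ (i+1)) : v ∈ Bset par τ (i+1) ∪ Xset par τ (i+1) := by
  by_cases hb : v ∈ Bset par τ (i+1)
  · exact Or.inl hb
  · exact Or.inr ⟨hv, fun h => h.elim hb hv2⟩

end Struct

section Counting

variable [Fintype V] {par : V → V} {r : V}
variable (hroot : par r = r) (hreach : ∀ v : V, ∃ m : ℕ, par^[m] v = r)
variable (hbin : ∀ v : V, {u | u ≠ v ∧ par u = v}.ncard = 0 ∨ {u | u ≠ v ∧ par u = v}.ncard = 2)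

/-- branching vertices of the `> τ` region -/
def Br (par : V → V) (τ : ℕ) (S : Set V) : Set V :=
  {v | ∃ a b : V, a ≠ b ∧ a ≠ v ∧ b ≠ v ∧ par a = v ∧ par b = v ∧
    τ < Wt par S a ∧ τ < Wt par S b}

lemma Br_lt {τ : ℕ} {S : Set V} {v : V} (hv : v ∈ Br par τ S) : τ < Wt par S v := by
  obtain ⟨a, _, _, hav, _, hpa, _, hWa, _⟩ := hv
  exact lt_of_lt_of_le hWa (Wt_mono (child_mem_desc par hpa) S)

include hroot hreach hbin in
lemma counting {τ : ℕ} (hτ : 1 ≤ τ) (S : Set V) :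
    ∀ v, τ < Wt par S v → (τ+1) * (1 + (desc par v ∩ Br par τ S).ncard) ≤ Wt par S v := by
  refine tree_ind hroot hreach _ ?_
  intro v ih hv
  rcases hbin v with h0 | h2
  · -- leaf: Wt ≤ 1 ≤ τ, contradiction
    exfalso
    have := Wt_leaf (v := v) (Set.ncard_eq_zero (Set.toFinite _) |>.mp h0) S
    omega
  · obtain ⟨a, b, hab, hset⟩ := Set.ncard_eq_two.mp h2
    have ha : a ≠ v ∧ par a = v := by
      have : a ∈ ({a, b} : Set V) := by simp
      rw [← hset] at this; exact this
    have hb : b ≠ v ∧ par b = v := by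
      have : b ∈ ({a, b} : Set V) := by simp
      rw [← hset] at this; exact this
    have hchild : ∀ u : V, u ≠ v → par u = v → u = a ∨ u = b := by
      intro u h1 h2'
      have : u ∈ ({a, b} : Set V) := by rw [← hset]; exact ⟨h1, h2'⟩
      simpa using this
    have hvBr : v ∈ Br par τ S → (τ < Wt par S a ∧ τ < Wt par S b) := by
      rintro ⟨a', b', hab', ha'v, hb'v, hpa', hpb', hWa', hWb'⟩
      rcases hchild a' ha'v hpa' with rfl | rfl <;>
        rcases hchild b' hb'v hpb' with rfl | rfl <;>
        first
          | exact absurd rfl hab'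
          | exact ⟨hWa', hWb'⟩
          | exact ⟨hWb', hWa'⟩
    have hsub := desc_subset_children hset
    -- helper for the one-sided case
    have oneside : ∀ x y : V, x ≠ y → x ≠ v → y ≠ v → par x = v → par y = v →
        τ < Wt par S x → ¬ τ < Wt par S y →
        desc par v ∩ Br par τ S ⊆ desc par x ∩ Br par τ S := by
      intro x y hxy hxv hyv hpx hpy hWx hWy
      rintro u ⟨hu1, hu2⟩
      have hWu : τ < Wt par S u := Br_lt hu2
      have husub := hsub hu1
      rcases husub with rfl | hu3 | hu3
      · exfalso
        obtain ⟨hWa, hWb⟩ := hvBr hu2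
        rcases hchild x hxv hpx with rfl | rfl
        · rcases hchild y hyv hpy with rfl | rfl
          · exact absurd rfl hxy
          · exact hWy hWb
        · rcases hchild y hyv hpy with rfl | rfl
          · exact hWy hWa
          · exact absurd rfl hxy
      all_goals {
        rcases hchild x hxv hpx with rfl | rfl <;> rcases hchild y hyv hpy with rfl | rfl
        all_goals first
          | exact absurd rfl hxy
          | exact ⟨hu3, hu2⟩
          | exact absurd (lt_of_lt_of_le hWu (Wt_mono hu3 S)) hWy }
    by_cases hWa : τ < Wt par S a <;> by_cases hWb : τ < Wt par S b
    · -- both children heavy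
      have hA := ih a ha.1 ha.2 hWa
      have hB := ih b hb.1 hb.2 hWb
      have hsum := Wt_superadd hroot hreach hab ha.1 hb.1 ha.2 hb.2 S
      have hcard : (desc par v ∩ Br par τ S).ncard ≤
          1 + ((desc par a ∩ Br par τ S).ncard + (desc par b ∩ Br par τ S).ncard) := by
        have hsub2 : desc par v ∩ Br par τ S ⊆
            insert v ((desc par a ∩ Br par τ S) ∪ (desc par b ∩ Br par τ S)) := by
          rintro u ⟨h1, h2⟩
          rcases hsub h1 with rfl | h3 | h3
          · exact Set.mem_insert _ _
          · exact Set.mem_insert_of_mem _ (Or.inl ⟨h3, h2⟩)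
          · exact Set.mem_insert_of_mem _ (Or.inr ⟨h3, h2⟩)
        calc (desc par v ∩ Br par τ S).ncard
            ≤ (insert v ((desc par a ∩ Br par τ S) ∪ (desc par b ∩ Br par τ S))).ncard :=
              Set.ncard_le_ncard hsub2 (Set.toFinite _)
          _ ≤ ((desc par a ∩ Br par τ S) ∪ (desc par b ∩ Br par τ S)).ncard + 1 :=
              Set.ncard_insert_le _ _
          _ ≤ 1 + ((desc par a ∩ Br par τ S).ncard + (desc par b ∩ Br par τ S).ncard) := by
              have := Set.ncard_union_le (desc par a ∩ Br par τ S) (desc par b ∩ Br par τ S)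
              omega
      calc (τ+1) * (1 + (desc par v ∩ Br par τ S).ncard)
          ≤ (τ+1) * ((1 + (desc par a ∩ Br par τ S).ncard)
              + (1 + (desc par b ∩ Br par τ S).ncard)) := by
            apply Nat.mul_le_mul_left; omega
        _ = (τ+1) * (1 + (desc par a ∩ Br par τ S).ncard)
              + (τ+1) * (1 + (desc par b ∩ Br par τ S).ncard) := by ring
        _ ≤ Wt par S a + Wt par S b := Nat.add_le_add hA hB
        _ ≤ Wt par S v := hsum
    · have hss := oneside a b hab ha.1 hb.1 ha.2 hb.2 hWa hWb
      have h1 : (desc par v ∩ Br par τ S).ncard ≤ (desc par a ∩ Br par τ S).ncard :=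
        Set.ncard_le_ncard hss (Set.toFinite _)
      have hA := ih a ha.1 ha.2 hWa
      calc (τ+1) * (1 + (desc par v ∩ Br par τ S).ncard)
          ≤ (τ+1) * (1 + (desc par a ∩ Br par τ S).ncard) := by
            apply Nat.mul_le_mul_left; omega
        _ ≤ Wt par S a := hA
        _ ≤ Wt par S v := Wt_mono (child_mem_desc par ha.2) S
    · have hss := oneside b a (Ne.symm hab) hb.1 ha.1 hb.2 ha.2 hWb hWa
      have h1 : (desc par v ∩ Br par τ S).ncard ≤ (desc par b ∩ Br par τ S).ncard :=
        Set.ncard_le_ncard hss (Set.toFinite _)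
      have hB := ih b hb.1 hb.2 hWb
      calc (τ+1) * (1 + (desc par v ∩ Br par τ S).ncard)
          ≤ (τ+1) * (1 + (desc par b ∩ Br par τ S).ncard) := by
            apply Nat.mul_le_mul_left; omega
        _ ≤ Wt par S b := hB
        _ ≤ Wt par S v := Wt_mono (child_mem_desc par hb.2) S
    · -- neither heavy: intersection is empty
      have hempty : desc par v ∩ Br par τ S = ∅ := by
        ext u
        simp only [Set.mem_inter_iff, Set.mem_empty_iff_false, iff_false, not_and]
        intro hu1 hu2
        have hWu : τ < Wt par S u := Br_lt hu2
        rcases hsub hu1 with rfl | h3 | h3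
        · exact hWa (hvBr hu2).1
        · exact hWa (lt_of_lt_of_le hWu (Wt_mono h3 S))
        · exact hWb (lt_of_lt_of_le hWu (Wt_mono h3 S))
      rw [hempty]
      simpa using hv

include hroot hreach hbin in
lemma R_card_step {τ : ℕ} (hτ : 1 ≤ τ) (i : ℕ) :
    (τ+1) * (Rset par τ (i+1)).ncard ≤ (Rset par τ i).ncard := by
  set S := Rset par τ i with hS
  have hdesc_r : desc par r = Set.univ := Set.eq_univ_of_forall (fun v => hreach v)
  by_cases hr : τ < Wt par S r
  · have hBr : Rset par τ (i+1) ⊆ Br par τ S := by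
      intro v hv
      obtain ⟨hvR, hvW, hch⟩ := hv
      rw [← hS] at hvW
      rcases hbin v with h0 | h2
      · exfalso
        have := Wt_leaf (v := v) (Set.ncard_eq_zero (Set.toFinite _) |>.mp h0) S
        omega
      · obtain ⟨a, b, hab, hset⟩ := Set.ncard_eq_two.mp h2
        have ha : a ≠ v ∧ par a = v := by
          have h' : a ∈ ({a, b} : Set V) := by simp
          rw [← hset] at h'; exact h'
        have hb : b ≠ v ∧ par b = v := by
          have h' : b ∈ ({a, b} : Set V) := by simp
          rw [← hset] at h'; exact h'
        exact ⟨a, b, hab, ha.1, hb.1, ha.2, hb.2, (hch a ha.1 ha.2).2, (hch b hb.1 hb.2).2⟩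
    have hcnt := counting hroot hreach hbin hτ S r hr
    have hWr : Wt par S r = S.ncard := by rw [Wt, hdesc_r, Set.univ_inter]
    have h1 : (Rset par τ (i+1)).ncard ≤ (desc par r ∩ Br par τ S).ncard :=
      Set.ncard_le_ncard (fun v hv => ⟨hdesc_r ▸ Set.mem_univ v, hBr hv⟩) (Set.toFinite _)
    calc (τ+1) * (Rset par τ (i+1)).ncard
        ≤ (τ+1) * (1 + (desc par r ∩ Br par τ S).ncard) := by
          apply Nat.mul_le_mul_left; omega
      _ ≤ Wt par S r := hcnt
      _ = S.ncard := hWr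
  · have hemp : Rset par τ (i+1) = ∅ := by
      ext v
      simp only [Set.mem_empty_iff_false, iff_false]
      rintro ⟨hvR, hvW, _⟩
      exact hr (lt_of_lt_of_le hvW (Wt_mono (hdesc_r ▸ Set.mem_univ v) S))
    rw [hemp]
    simp

include hroot hreach hbin in
lemma R_card {τ : ℕ} (hτ : 1 ≤ τ) : ∀ i : ℕ,
    (τ+1)^i * (Rset par τ i).ncard ≤ Fintype.card V := by
  intro i
  induction i with
  | zero => simp [Rset, Set.ncard_univ]
  | succ i ih =>
    calc (τ+1)^(i+1) * (Rset par τ (i+1)).ncard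
        = (τ+1)^i * ((τ+1) * (Rset par τ (i+1)).ncard) := by ring
      _ ≤ (τ+1)^i * (Rset par τ i).ncard :=
          Nat.mul_le_mul_left _ (R_card_step hroot hreach hbin hτ i)
      _ ≤ Fintype.card V := ih

end Counting

section Component

variable [Fintype V] {par : V → V} {r : V}
variable (hroot : par r = r) (hreach : ∀ v : V, ∃ m : ℕ, par^[m] v = r)

open Classical in
include hroot in
lemma depth_par_lt {v : V} (hv : v ≠ r) :
    Nat.find (hreach (par v)) < Nat.find (hreach v) := by
  have h0 : Nat.find (hreach v) ≠ 0 := by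
    intro h
    have := Nat.find_spec (hreach v)
    rw [h] at this
    exact hv (by simpa using this)
  have hspec : par^[Nat.find (hreach v)] v = r := Nat.find_spec (hreach v)
  have hpv : par^[Nat.find (hreach v) - 1] (par v) = r := by
    rw [← Function.iterate_succ_apply, Nat.succ_eq_add_one, Nat.sub_add_cancel (by omega)]
    exact hspec
  have := Nat.find_min' (hreach (par v)) hpv
  omega

lemma adjOn_symm {S : Set V} : Symmetric (adjOn par S) :=
  fun _ _ ⟨h1, h2, h3, h4⟩ => ⟨h2, h1, h3.symm, h4.symm⟩

include hroot hreach in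
lemma component_small {τ : ℕ} {Sp A : Set V} (hAS : A ⊆ Sp)
    (hA : ∀ v ∈ A, Wt par Sp v ≤ τ) {v : V} (hv : v ∈ A) :
    ({u | Relation.ReflTransGen (adjOn par A) v u}).ncard ≤ τ := by
  classical
  set C := {u | Relation.ReflTransGen (adjOn par A) v u} with hC
  have hvC : v ∈ C := Relation.ReflTransGen.refl
  have hCA : C ⊆ A := by
    intro u hu
    rcases Relation.ReflTransGen.cases_tail hu with h | ⟨c, _, hadj⟩
    · rw [h]; exact hv
    · exact hadj.2.1
  obtain ⟨m, hmC, hmin⟩ := Set.exists_min_image C (fun u => Nat.find (hreach u))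
    (Set.toFinite C) ⟨v, hvC⟩
  have hkey : ∀ u, Relation.ReflTransGen (adjOn par A) m u → u ∈ desc par m := by
    intro u hu
    induction hu with
    | refl => exact mem_desc_self par m
    | @tail b c hb hadj ih =>
      obtain ⟨hbA, hcA, hne, hor⟩ := hadj
      rcases hor with hpb | hpc
      · -- par b = c : c is the parent of b
        by_cases hbm : b = m
        · subst hbm
          -- c = par m would be shallower than m, contradicting minimality
          exfalso
          have hmr : b ≠ r := by
            rintro rfl
            exact hne (by rw [← hpb, hroot])
          have hcC : c ∈ C := Relation.ReflTransGen.trans hmC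
            (Relation.ReflTransGen.single ⟨hbA, hcA, hne, Or.inl hpb⟩)
          have h1 := hmin c hcC
          have h3 := depth_par_lt (hreach := hreach) hroot hmr
          rw [hpb] at h3
          exact absurd h1 (by simpa using Nat.not_le.mpr h3)
        · obtain ⟨e, he⟩ := ih
          obtain ⟨e', rfl⟩ : ∃ e', e = e' + 1 := by
            rcases Nat.eq_zero_or_pos e with rfl | hpos
            · exact absurd (by simpa using he) hbm
            · exact ⟨e - 1, by omega⟩
          exact ⟨e', by rw [← hpb, ← Function.iterate_succ_apply]; exact he⟩
      · -- par c = b : c is a child of b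
        exact desc_trans ih (child_mem_desc par hpc)
  have hCsub : C ⊆ desc par m ∩ Sp := by
    intro u hu
    have hmv : Relation.ReflTransGen (adjOn par A) m v := by
      haveI : Std.Symm (adjOn par A) := ⟨fun a b h => adjOn_symm h⟩
      exact Relation.ReflTransGen.symmetric.symm _ _ hmC
    exact ⟨hkey u (Relation.ReflTransGen.trans hmv hu), hAS (hCA hu)⟩
  calc C.ncard ≤ (desc par m ∩ Sp).ncard := Set.ncard_le_ncard hCsub (Set.toFinite _)
    _ ≤ τ := hA m (hCA hmC)

end Component

section LU

variable {par : V → V} {τ : ℕ}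

lemma lowerUnion_succ (B X : ℕ → Set V) (i : ℕ) (hi : 1 ≤ i) :
    lowerUnion B X (i+1) = (lowerUnion B X i ∪ B (i+1)) ∪ X i := by
  ext u
  simp only [lowerUnion, Set.mem_union, Set.mem_iUnion, Set.mem_Icc, exists_prop]
  constructor
  · rintro (⟨j, ⟨h1, h2⟩, h3⟩ | ⟨j, ⟨h1, h2⟩, h3⟩)
    · rcases Nat.lt_or_ge j (i+1) with h | h
      · exact Or.inl (Or.inl (Or.inl ⟨j, ⟨h1, by omega⟩, h3⟩))
      · have : j = i + 1 := by omega
        subst this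
        exact Or.inl (Or.inr h3)
    · have h2' : j ≤ i := by omega
      rcases Nat.lt_or_ge j i with h | h
      · exact Or.inl (Or.inl (Or.inr ⟨j, ⟨h1, by omega⟩, h3⟩))
      · have : j = i := by omega
        subst this
        exact Or.inr h3
  · rintro (((⟨j, ⟨h1, h2⟩, h3⟩ | ⟨j, ⟨h1, h2⟩, h3⟩) | h) | h)
    · exact Or.inl ⟨j, ⟨h1, by omega⟩, h3⟩
    · exact Or.inr ⟨j, ⟨h1, by omega⟩, h3⟩
    · exact Or.inl ⟨i+1, ⟨by omega, le_rfl⟩, h⟩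
    · exact Or.inr ⟨i, ⟨hi, by omega⟩, h⟩

lemma Rset_compl_succ (par : V → V) (τ i : ℕ) :
    (Rset par τ (i+1))ᶜ = (Rset par τ i)ᶜ ∪ Bset par τ (i+1) ∪ Xset par τ (i+1) := by
  ext v
  simp only [Set.mem_compl_iff, Set.mem_union]
  constructor
  · intro h
    by_cases hR : v ∈ Rset par τ i
    · rcases Rset_diff par τ i hR h with hB | hX
      · exact Or.inl (Or.inr hB)
      · exact Or.inr hX
    · exact Or.inl (Or.inl hR)
  · rintro ((h | h) | h)
    · exact fun h2 => h (Rset_succ_subset par τ i h2)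
    · intro h2
      have := Bset_inter_Rset par τ i
      rw [Set.eq_empty_iff_forall_notMem] at this
      exact this v ⟨h, h2⟩
    · intro h2
      have := Xset_inter_Rset par τ i
      rw [Set.eq_empty_iff_forall_notMem] at this
      exact this v ⟨h, h2⟩

lemma lowerUnion_eq (par : V → V) (τ : ℕ) : ∀ i : ℕ,
    lowerUnion (Bset par τ) (Xset par τ) (i+1) = (Rset par τ i)ᶜ ∪ Bset par τ (i+1) := by
  intro i
  induction i with
  | zero =>
    ext u
    simp only [lowerUnion, Set.mem_union, Set.mem_iUnion, Set.mem_Icc, exists_prop,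
      Set.mem_compl_iff, Rset, Set.mem_univ, not_true_eq_false, false_or]
    constructor
    · rintro (⟨j, ⟨h1, h2⟩, h3⟩ | ⟨j, ⟨h1, h2⟩, h3⟩)
      · have : j = 1 := by omega
        subst this; exact h3
      · omega
    · intro h
      exact Or.inl ⟨1, ⟨le_rfl, le_rfl⟩, h⟩
  | succ i ih =>
    rw [lowerUnion_succ _ _ (i+1) (by omega), ih, Rset_compl_succ par τ i]
    ext u
    simp only [Set.mem_union]
    tauto

end LU

end Stmt10

open Stmt10 in
/-- every finite rooted tree with `n ≥ 1` vertices in which every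
vertex has exactly 0 or 2 children admits a partition
`V = B₁ ∪ X₁ ∪ B₂ ∪ X₂ ∪ ⋯ ∪ X_{k−1} ∪ B_k` satisfying:
(P1) each connected component of each `B_i` has at most `n^{1/k}` vertices;
(P2) every vertex of `X_i` has a child in `B₁ ∪ X₁ ∪ ⋯ ∪ X_{i−1} ∪ B_i`;
(P3) every child of every vertex of `B_i` lies in `B₁ ∪ X₁ ∪ ⋯ ∪ X_{i−1} ∪ B_i`. -/
theorem stmt10 {V : Type*} [Fintype V] (k : ℕ) (hk : 1 ≤ k)
    (par : V → V) (r : V) (hroot : par r = r)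
    (hnr : ∀ v : V, v ≠ r → par v ≠ v)
    (hreach : ∀ v : V, ∃ m : ℕ, par^[m] v = r)
    (hbin : ∀ v : V, {u | u ≠ v ∧ par u = v}.ncard = 0 ∨ {u | u ≠ v ∧ par u = v}.ncard = 2)
    (n : ℕ) (hn : n = Fintype.card V) (hn1 : 1 ≤ n) :
    ∃ B X : ℕ → Set V,
      -- the sets cover all of V …
      (∀ v : V, (∃ i, 1 ≤ i ∧ i ≤ k ∧ v ∈ B i) ∨ (∃ i, 1 ≤ i ∧ i ≤ k - 1 ∧ v ∈ X i)) ∧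
      -- … and are pairwise disjoint
      (∀ i j, 1 ≤ i → i ≤ k → 1 ≤ j → j ≤ k → i ≠ j → B i ∩ B j = ∅) ∧
      (∀ i j, 1 ≤ i → i ≤ k - 1 → 1 ≤ j → j ≤ k - 1 → i ≠ j → X i ∩ X j = ∅) ∧
      (∀ i j, 1 ≤ i → i ≤ k → 1 ≤ j → j ≤ k - 1 → B i ∩ X j = ∅) ∧
      -- (P1)
      (∀ i, 1 ≤ i → i ≤ k → ∀ v ∈ B i,
        (({u | Relation.ReflTransGen (adjOn par (B i)) v u}).ncard : ℝ) ≤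
          (n : ℝ) ^ ((1 : ℝ) / (k : ℝ))) ∧
      -- (P2)
      (∀ i, 1 ≤ i → i ≤ k - 1 → ∀ v ∈ X i,
        ∃ u : V, u ≠ v ∧ par u = v ∧ u ∈ lowerUnion B X i) ∧
      -- (P3)
      (∀ i, 1 ≤ i → i ≤ k → ∀ v ∈ B i, ∀ u : V, u ≠ v → par u = v →
        u ∈ lowerUnion B X i) := by
  classical
  set x : ℝ := (n : ℝ) ^ ((1:ℝ)/(k:ℝ)) with hx
  set τ : ℕ := ⌊x⌋₊ with hτdef
  have hx0 : (0:ℝ) ≤ x := Real.rpow_nonneg (by positivity) _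
  have hx1 : (1:ℝ) ≤ x := Real.one_le_rpow (by exact_mod_cast hn1) (by positivity)
  have hτ1 : 1 ≤ τ := Nat.le_floor (by exact_mod_cast hx1)
  have hτx : (τ : ℝ) ≤ x := Nat.floor_le hx0
  have hxk : x ^ (k:ℕ) = (n:ℝ) := by
    rw [hx, ← Real.rpow_natCast ((n:ℝ) ^ ((1:ℝ)/(k:ℝ))) k, ← Real.rpow_mul (by positivity)]
    rw [one_div, inv_mul_cancel₀ (by exact_mod_cast (by omega : k ≠ 0)), Real.rpow_one]
  have hnlt : n < (τ+1)^k := by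
    have h1 : x < (τ:ℝ) + 1 := Nat.lt_floor_add_one x
    have h2 : (n:ℝ) < ((τ:ℝ)+1)^(k:ℕ) := by
      rw [← hxk]
      exact pow_lt_pow_left₀ h1 hx0 (by omega)
    have h3 : ((n:ℕ):ℝ) < (((τ+1)^k : ℕ) : ℝ) := by push_cast; exact h2
    exact_mod_cast h3
  obtain ⟨k', rfl⟩ : ∃ k', k = k' + 1 := ⟨k - 1, by omega⟩
  have hRk : (Rset par τ k').ncard ≤ τ := by
    by_contra hcon
    push_neg at hcon
    have h1 := R_card hroot hreach hbin hτ1 (τ := τ) k'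
    have h2 : (τ+1)^k' * (τ+1) ≤ (τ+1)^k' * (Rset par τ k').ncard :=
      Nat.mul_le_mul_left _ (by omega)
    have h3 : (τ+1)^(k'+1) ≤ Fintype.card V := by rw [pow_succ]; omega
    rw [← hn] at h3
    omega
  have hRB : Rset par τ k' ⊆ Bset par τ (k'+1) :=
    fun v hv => ⟨hv, le_trans (Wt_le_ncard _ _) hRk⟩
  have hBR : ∀ i : ℕ, ∀ v : V, v ∈ Bset par τ (i+1) → v ∉ Rset par τ (i+1) := by
    intro i v hB hR
    have h := Bset_inter_Rset par τ i
    rw [Set.eq_empty_iff_forall_notMem] at h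
    exact h v ⟨hB, hR⟩
  have hXR : ∀ i : ℕ, ∀ v : V, v ∈ Xset par τ (i+1) → v ∉ Rset par τ (i+1) := by
    intro i v hX hR
    have h := Xset_inter_Rset par τ i
    rw [Set.eq_empty_iff_forall_notMem] at h
    exact h v ⟨hX, hR⟩
  have hBX0 : ∀ i : ℕ, ∀ v : V, v ∈ Bset par τ (i+1) → v ∉ Xset par τ (i+1) := by
    intro i v hB hX
    have h := Bset_inter_Xset par τ i
    rw [Set.eq_empty_iff_forall_notMem] at h
    exact h v ⟨hB, hX⟩
  refine ⟨Bset par τ, Xset par τ, ?_, ?_, ?_, ?_, ?_, ?_, ?_⟩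
  · -- cover
    intro v
    have hcov : ∀ i : ℕ, v ∈ Rset par τ i ∨ (∃ j, 1 ≤ j ∧ j ≤ i ∧ v ∈ Bset par τ j) ∨
        (∃ j, 1 ≤ j ∧ j ≤ i ∧ v ∈ Xset par τ j) := by
      intro i
      induction i with
      | zero => exact Or.inl (by simp [Rset])
      | succ i ih =>
        rcases ih with h | ⟨j, h1, h2, h3⟩ | ⟨j, h1, h2, h3⟩
        · by_cases h2 : v ∈ Rset par τ (i+1)
          · exact Or.inl h2
          · rcases Rset_diff par τ i h h2 with hB | hX
            · exact Or.inr (Or.inl ⟨i+1, by omega, le_rfl, hB⟩)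
            · exact Or.inr (Or.inr ⟨i+1, by omega, le_rfl, hX⟩)
        · exact Or.inr (Or.inl ⟨j, h1, by omega, h3⟩)
        · exact Or.inr (Or.inr ⟨j, h1, by omega, h3⟩)
    rcases hcov k' with h | ⟨j, h1, h2, h3⟩ | ⟨j, h1, h2, h3⟩
    · exact Or.inl ⟨k'+1, by omega, le_rfl, hRB h⟩
    · exact Or.inl ⟨j, h1, by omega, h3⟩
    · exact Or.inr ⟨j, h1, by omega, h3⟩
  · -- B disjoint
    intro i j hi1 _ hj1 _ hij
    have key : ∀ a b : ℕ, 1 ≤ a → a < b → Bset par τ a ∩ Bset par τ b = ∅ := by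
      intro a b ha hab
      obtain ⟨a', rfl⟩ : ∃ a', a = a' + 1 := ⟨a - 1, by omega⟩
      obtain ⟨b', rfl⟩ : ∃ b', b = b' + 1 := ⟨b - 1, by omega⟩
      rw [Set.eq_empty_iff_forall_notMem]
      rintro v ⟨hva, hvb⟩
      exact hBR a' v hva (Rset_antitone par τ (by omega) (Bset_subset par τ b' hvb))
    rcases Nat.lt_or_ge i j with h | h
    · exact key i j hi1 h
    · rw [Set.inter_comm]; exact key j i hj1 (by omega)
  · -- X disjoint
    intro i j hi1 _ hj1 _ hij
    have key : ∀ a b : ℕ, 1 ≤ a → a < b → Xset par τ a ∩ Xset par τ b = ∅ := by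
      intro a b ha hab
      obtain ⟨a', rfl⟩ : ∃ a', a = a' + 1 := ⟨a - 1, by omega⟩
      obtain ⟨b', rfl⟩ : ∃ b', b = b' + 1 := ⟨b - 1, by omega⟩
      rw [Set.eq_empty_iff_forall_notMem]
      rintro v ⟨hva, hvb⟩
      exact hXR a' v hva (Rset_antitone par τ (by omega) (Xset_subset par τ b' hvb))
    rcases Nat.lt_or_ge i j with h | h
    · exact key i j hi1 h
    · rw [Set.inter_comm]; exact key j i hj1 (by omega)
  · -- B ∩ X disjoint
    intro i j hi1 _ hj1 _
    obtain ⟨i', rfl⟩ : ∃ i', i = i' + 1 := ⟨i - 1, by omega⟩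
    obtain ⟨j', rfl⟩ : ∃ j', j = j' + 1 := ⟨j - 1, by omega⟩
    rw [Set.eq_empty_iff_forall_notMem]
    rintro v ⟨hvB, hvX⟩
    rcases lt_trichotomy i' j' with h | rfl | h
    · exact hBR i' v hvB (Rset_antitone par τ (by omega) (Xset_subset par τ j' hvX))
    · exact hBX0 i' v hvB hvX
    · exact hXR j' v hvX (Rset_antitone par τ (by omega) (Bset_subset par τ i' hvB))
  · -- P1
    intro i hi1 _ v hv
    obtain ⟨i', rfl⟩ : ∃ i', i = i' + 1 := ⟨i - 1, by omega⟩
    have hle : ({u | Relation.ReflTransGen (adjOn par (Bset par τ (i'+1))) v u}).ncard ≤ τ :=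
      component_small hroot hreach (Bset_subset par τ i') (fun u hu => hu.2) hv
    calc (({u | Relation.ReflTransGen (adjOn par (Bset par τ (i'+1))) v u}).ncard : ℝ)
        ≤ (τ : ℝ) := Nat.cast_le.mpr hle
      _ ≤ x := hτx
  · -- P2
    intro i hi1 _ v hv
    obtain ⟨i', rfl⟩ : ∃ i', i = i' + 1 := ⟨i - 1, by omega⟩
    obtain ⟨hvR, hvn⟩ := hv
    have hnB : v ∉ Bset par τ (i'+1) := fun h => hvn (Or.inl h)
    have hnR : v ∉ Rset par τ (i'+1) := fun h => hvn (Or.inr h)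
    have hWv : τ < Wt par (Rset par τ i') v := by
      by_contra h
      exact hnB ⟨hvR, by omega⟩
    have hex : ∃ u, u ≠ v ∧ par u = v ∧
        (u ∉ Rset par τ i' ∨ Wt par (Rset par τ i') u ≤ τ) := by
      by_contra hcon
      push_neg at hcon
      refine hnR ⟨hvR, hWv, fun u h1 h2 => ?_⟩
      obtain ⟨hu1, hu2⟩ := hcon u h1 h2
      exact ⟨hu1, by omega⟩
    obtain ⟨u, h1, h2, h3⟩ := hex
    refine ⟨u, h1, h2, ?_⟩
    rw [lowerUnion_eq par τ i']
    rcases h3 with h | h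
    · exact Or.inl h
    · by_cases hR : u ∈ Rset par τ i'
      · exact Or.inr ⟨hR, h⟩
      · exact Or.inl hR
  · -- P3
    intro i hi1 _ v hv u hu hpu
    obtain ⟨i', rfl⟩ : ∃ i', i = i' + 1 := ⟨i - 1, by omega⟩
    rw [lowerUnion_eq par τ i']
    by_cases hR : u ∈ Rset par τ i'
    · exact Or.inr ⟨hR, le_trans (Wt_mono (child_mem_desc par hpu) _) hv.2⟩
    · exact Or.inl hR
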